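/- Let D be a finitely complete category satisfying the triangular lemma, let C be a finitely complete category, and let F : C ⥤ D be a functor which reflects isomorphisms (is conservative) and preserves pullbacks and equalizers. Then C satisfies the triangular lemma. -/

import Mathlib

open CategoryTheory CategoryTheory.Limits

universe v u v₂ u₂

variable {C : Type u} [Category.{v} C]

/-- For an internal relation represented by `r : R₀ ⟶ X ⨯ X` and morphisms
`x, y : S ⟶ X`, `x R y` means `⟨x, y⟩` factors through `r`. -/
def CategoryTheory.RelFactors [HasBinaryProducts C] {R₀ X : C} (r : R₀ ⟶ X ⨯ X)
    {S : C} (x y : S ⟶ X) : Prop :=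
  ∃ u : S ⟶ R₀, u ≫ r = prod.lift x y

/-- `r : R₀ ⟶ X ⨯ X` represents an internal equivalence relation on `X`:
it is a monomorphism and the induced relation on generalized elements is reflexive,
symmetric and transitive. -/
structure CategoryTheory.IsInternalEquivalence [HasBinaryProducts C] {R₀ X : C}
    (r : R₀ ⟶ X ⨯ X) : Prop where
  mono : Mono r
  refl : ∀ ⦃S : C⦄ (x : S ⟶ X), RelFactors r x x
  symm : ∀ ⦃S : C⦄ (x y : S ⟶ X), RelFactors r x y → RelFactors r y x
  trans : ∀ ⦃S : C⦄ (x y z : S ⟶ X),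
    RelFactors r x y → RelFactors r y z → RelFactors r x z

/-- A category with binary products satisfies the *triangular lemma* if for all internal
equivalence relations `R, S, T` on an object `X` with `R ∩ S ≤ T`, whenever
`x R y`, `y S z` and `x T z`, then `y T z`. -/
def CategoryTheory.SatisfiesTriangularLemma (C : Type u) [Category.{v} C]
    [HasBinaryProducts C] : Prop :=
  ∀ ⦃X R₀ S₀ T₀ : C⦄ (r : R₀ ⟶ X ⨯ X) (s : S₀ ⟶ X ⨯ X) (t : T₀ ⟶ X ⨯ X),
    IsInternalEquivalence r → IsInternalEquivalence s → IsInternalEquivalence t →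
    (∀ ⦃W : C⦄ (x y : W ⟶ X), RelFactors r x y → RelFactors s x y → RelFactors t x y) →
    ∀ ⦃W : C⦄ (x y z : W ⟶ X),
      RelFactors r x y → RelFactors s y z → RelFactors t x z → RelFactors t y z


set_option linter.unusedSectionVars false

namespace TriangularAux

open CategoryTheory CategoryTheory.Limits

variable {C : Type u} [Category.{v} C] {D : Type u₂} [Category.{v₂} D]
  [HasFiniteLimits C] [HasFiniteLimits D]
  (F : C ⥤ D) [F.ReflectsIsomorphisms] [PreservesLimitsOfShape WalkingCospan F]

/-- The comparison map `F (X ⨯ X) ⟶ F X ⨯ F X`. -/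
noncomputable def cmp (X : C) : F.obj (X ⨯ X) ⟶ F.obj X ⨯ F.obj X :=
  prod.lift (F.map prod.fst) (F.map prod.snd)

lemma map_comp_cmp {X A : C} (h : A ⟶ X ⨯ X) :
    F.map h ≫ cmp F X = prod.lift (F.map (h ≫ prod.fst)) (F.map (h ≫ prod.snd)) := by
  apply Limits.prod.hom_ext <;>
    simp only [cmp, Category.assoc, prod.lift_fst, prod.lift_snd, ← Functor.map_comp]

lemma isPullback_prod (X : C) :
    IsPullback (prod.fst : X ⨯ X ⟶ X) prod.snd (terminal.from X) (terminal.from X) :=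
  IsPullback.of_isLimit
    (isPullbackOfIsTerminalIsProduct _ _ _ _ terminalIsTerminal (prodIsProd X X))

lemma mono_cmp (X : C) : Mono (cmp F X) := by
  constructor
  intro Z a b h
  have hp := (isPullback_prod X).map F
  apply PullbackCone.IsLimit.hom_ext hp.isLimit
  · have := congrArg (· ≫ (prod.fst : F.obj X ⨯ F.obj X ⟶ F.obj X)) h
    simp [cmp, prod.lift_fst, prod.lift_snd, prod.lift_fst_assoc, prod.lift_snd_assoc] at this; exact this
  · have := congrArg (· ≫ (prod.snd : F.obj X ⨯ F.obj X ⟶ F.obj X)) h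
    simp [cmp, prod.lift_fst, prod.lift_snd, prod.lift_fst_assoc, prod.lift_snd_assoc] at this; exact this

/-- The transferred relation on `F X`. -/
noncomputable def tr {R₀ X : C} (r : R₀ ⟶ X ⨯ X) : F.obj R₀ ⟶ F.obj X ⨯ F.obj X :=
  F.map r ≫ cmp F X

lemma tr_fst {R₀ X : C} (r : R₀ ⟶ X ⨯ X) : tr F r ≫ prod.fst = F.map (r ≫ prod.fst) := by
  rw [tr, Category.assoc, cmp, prod.lift_fst, ← F.map_comp]

lemma tr_snd {R₀ X : C} (r : R₀ ⟶ X ⨯ X) : tr F r ≫ prod.snd = F.map (r ≫ prod.snd) := by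
  rw [tr, Category.assoc, cmp, prod.lift_snd, ← F.map_comp]

lemma relFactors_map {R₀ X : C} {r : R₀ ⟶ X ⨯ X} {W : C} {x y : W ⟶ X}
    (h : RelFactors r x y) : RelFactors (tr F r) (F.map x) (F.map y) := by
  obtain ⟨u, hu⟩ := h
  refine ⟨F.map u, ?_⟩
  rw [tr, ← Category.assoc, ← F.map_comp, hu, map_comp_cmp]
  apply Limits.prod.hom_ext <;> simp [prod.lift_fst, prod.lift_snd, prod.lift_fst_assoc, prod.lift_snd_assoc]

lemma relFactors_reflect {T₀ X W : C} (t : T₀ ⟶ X ⨯ X) [Mono t] (y z : W ⟶ X)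
    (h : RelFactors (tr F t) (F.map y) (F.map z)) : RelFactors t y z := by
  obtain ⟨w, hw⟩ := h
  have hmc := mono_cmp F X
  have hwt : w ≫ F.map t = F.map (prod.lift y z) := by
    apply (cancel_mono (cmp F X)).1
    rw [Category.assoc, ← tr, hw, map_comp_cmp]
    apply Limits.prod.hom_ext <;> simp [prod.lift_fst, prod.lift_snd, prod.lift_fst_assoc, prod.lift_snd_assoc]
  have hp := (IsPullback.of_hasPullback t (prod.lift y z)).map F
  set k := pullback.snd t (prod.lift y z) with hk
  have hsplit : IsSplitEpi (F.map k) := by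
    refine IsSplitEpi.mk' ⟨hp.lift w (𝟙 _) (by simpa using hwt), ?_⟩
    exact hp.lift_snd _ _ _
  have hmk : Mono k := inferInstance
  have : Mono (F.map k) := preserves_mono_of_preservesLimit F k
  have : IsIso (F.map k) := isIso_of_mono_of_isSplitEpi _
  have : IsIso k := isIso_of_reflects_iso k F
  refine ⟨inv k ≫ pullback.fst t (prod.lift y z), ?_⟩
  rw [Category.assoc, pullback.condition, ← Category.assoc, IsIso.inv_hom_id, Category.id_comp]

lemma equiv_map {R₀ X : C} {r : R₀ ⟶ X ⨯ X} (hr : IsInternalEquivalence r) :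
    IsInternalEquivalence (tr F r) := by
  have := hr.mono
  constructor
  · have : Mono (F.map r) := preserves_mono_of_preservesLimit F r
    have := mono_cmp F X
    exact mono_comp _ _
  · -- refl
    intro S x
    obtain ⟨u, hu⟩ := hr.refl (𝟙 X)
    have h1 : u ≫ r ≫ prod.fst = 𝟙 X := by rw [← Category.assoc, hu]; simp [prod.lift_fst, prod.lift_snd, prod.lift_fst_assoc, prod.lift_snd_assoc]
    have h2 : u ≫ r ≫ prod.snd = 𝟙 X := by rw [← Category.assoc, hu]; simp [prod.lift_fst, prod.lift_snd, prod.lift_fst_assoc, prod.lift_snd_assoc]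
    refine ⟨x ≫ F.map u, ?_⟩
    apply Limits.prod.hom_ext
    · rw [Category.assoc, Category.assoc, tr_fst, ← F.map_comp, h1]; simp [prod.lift_fst, prod.lift_snd, prod.lift_fst_assoc, prod.lift_snd_assoc]
    · rw [Category.assoc, Category.assoc, tr_snd, ← F.map_comp, h2]; simp [prod.lift_fst, prod.lift_snd, prod.lift_fst_assoc, prod.lift_snd_assoc]
  · -- symm
    intro S a b h
    obtain ⟨u, hu⟩ := h
    obtain ⟨σ, hσ⟩ := hr.symm (r ≫ prod.fst) (r ≫ prod.snd)
      ⟨𝟙 _, by rw [Category.id_comp]; apply Limits.prod.hom_ext <;> simp [prod.lift_fst, prod.lift_snd, prod.lift_fst_assoc, prod.lift_snd_assoc]⟩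
    have ha : u ≫ F.map (r ≫ prod.fst) = a := by
      rw [← tr_fst, ← Category.assoc, hu]; simp [prod.lift_fst, prod.lift_snd, prod.lift_fst_assoc, prod.lift_snd_assoc]
    have hb : u ≫ F.map (r ≫ prod.snd) = b := by
      rw [← tr_snd, ← Category.assoc, hu]; simp [prod.lift_fst, prod.lift_snd, prod.lift_fst_assoc, prod.lift_snd_assoc]
    have h1 : σ ≫ r ≫ prod.fst = r ≫ prod.snd := by rw [← Category.assoc, hσ]; simp [prod.lift_fst, prod.lift_snd, prod.lift_fst_assoc, prod.lift_snd_assoc]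
    have h2 : σ ≫ r ≫ prod.snd = r ≫ prod.fst := by rw [← Category.assoc, hσ]; simp [prod.lift_fst, prod.lift_snd, prod.lift_fst_assoc, prod.lift_snd_assoc]
    refine ⟨u ≫ F.map σ, ?_⟩
    apply Limits.prod.hom_ext
    · rw [Category.assoc, Category.assoc, tr_fst, ← F.map_comp, h1, hb]; simp [prod.lift_fst, prod.lift_snd, prod.lift_fst_assoc, prod.lift_snd_assoc]
    · rw [Category.assoc, Category.assoc, tr_snd, ← F.map_comp, h2, ha]; simp [prod.lift_fst, prod.lift_snd, prod.lift_fst_assoc, prod.lift_snd_assoc]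
  · -- trans
    intro S a b c h₁ h₂
    obtain ⟨u, hu⟩ := h₁
    obtain ⟨v, hv⟩ := h₂
    set p₁ := pullback.fst (r ≫ prod.snd) (r ≫ prod.fst) with hp₁
    set p₂ := pullback.snd (r ≫ prod.snd) (r ≫ prod.fst) with hp₂
    obtain ⟨τ, hτ⟩ := hr.trans (p₁ ≫ r ≫ prod.fst) (p₁ ≫ r ≫ prod.snd) (p₂ ≫ r ≫ prod.snd)
      ⟨p₁, by apply Limits.prod.hom_ext <;> simp [prod.lift_fst, prod.lift_snd, prod.lift_fst_assoc, prod.lift_snd_assoc]⟩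
      ⟨p₂, by
        apply Limits.prod.hom_ext
        · simpa [hp₁, hp₂, prod.lift_fst, prod.lift_snd, prod.lift_fst_assoc, prod.lift_snd_assoc] using (pullback.condition (f := r ≫ prod.snd) (g := r ≫ prod.fst)).symm
        · simp [prod.lift_fst, prod.lift_snd, prod.lift_fst_assoc, prod.lift_snd_assoc]⟩
    have hub : u ≫ F.map (r ≫ prod.snd) = b := by
      rw [← tr_snd, ← Category.assoc, hu]; simp [prod.lift_fst, prod.lift_snd, prod.lift_fst_assoc, prod.lift_snd_assoc]
    have hvb : v ≫ F.map (r ≫ prod.fst) = b := by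
      rw [← tr_fst, ← Category.assoc, hv]; simp [prod.lift_fst, prod.lift_snd, prod.lift_fst_assoc, prod.lift_snd_assoc]
    have hua : u ≫ F.map (r ≫ prod.fst) = a := by
      rw [← tr_fst, ← Category.assoc, hu]; simp [prod.lift_fst, prod.lift_snd, prod.lift_fst_assoc, prod.lift_snd_assoc]
    have hvc : v ≫ F.map (r ≫ prod.snd) = c := by
      rw [← tr_snd, ← Category.assoc, hv]; simp [prod.lift_fst, prod.lift_snd, prod.lift_fst_assoc, prod.lift_snd_assoc]
    have hpb := (IsPullback.of_hasPullback (r ≫ prod.snd) (r ≫ prod.fst)).map F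
    set w := hpb.lift u v (hub.trans hvb.symm) with hwdef
    have hw₁ : w ≫ F.map p₁ = u := hpb.lift_fst _ _ _
    have hw₂ : w ≫ F.map p₂ = v := hpb.lift_snd _ _ _
    have h1 : τ ≫ r ≫ prod.fst = p₁ ≫ (r ≫ prod.fst) := by
      rw [← Category.assoc, hτ]; simp [prod.lift_fst, prod.lift_snd, prod.lift_fst_assoc, prod.lift_snd_assoc]
    have h2 : τ ≫ r ≫ prod.snd = p₂ ≫ (r ≫ prod.snd) := by
      rw [← Category.assoc, hτ]; simp [prod.lift_fst, prod.lift_snd, prod.lift_fst_assoc, prod.lift_snd_assoc]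
    refine ⟨w ≫ F.map τ, ?_⟩
    apply Limits.prod.hom_ext
    · rw [Category.assoc, Category.assoc, tr_fst, ← F.map_comp, h1, F.map_comp,
        ← Category.assoc, hw₁, hua]
      simp [prod.lift_fst, prod.lift_snd, prod.lift_fst_assoc, prod.lift_snd_assoc]
    · rw [Category.assoc, Category.assoc, tr_snd, ← F.map_comp, h2, F.map_comp,
        ← Category.assoc, hw₂, hvc]
      simp [prod.lift_fst, prod.lift_snd, prod.lift_fst_assoc, prod.lift_snd_assoc]

end TriangularAux

/-- If `D` is finitely complete and satisfies the triangular lemma, `C` is finitely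
complete, and `F : C ⥤ D` is conservative and preserves pullbacks and equalizers,
then `C` satisfies the triangular lemma. -/
theorem triangular_of_conservative_functor {D : Type u₂} [Category.{v₂} D]
    [HasFiniteLimits C] [HasFiniteLimits D]
    (F : C ⥤ D) [F.ReflectsIsomorphisms]
    [PreservesLimitsOfShape WalkingCospan F]
    [PreservesLimitsOfShape WalkingParallelPair F]
    (hD : SatisfiesTriangularLemma D) :
    SatisfiesTriangularLemma C := by
  classical
  intro X R₀ S₀ T₀ r s t hr hs ht hRS W x y z hxy hyz hxz
  open TriangularAux in
  -- Transfer the intersection hypothesis to `D`.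
  have hmc := mono_cmp F X
  obtain ⟨θ, hθ⟩ := hRS (pullback.fst r s ≫ r ≫ prod.fst) (pullback.fst r s ≫ r ≫ prod.snd)
    ⟨pullback.fst r s, by apply Limits.prod.hom_ext <;> simp [prod.lift_fst, prod.lift_snd, prod.lift_fst_assoc, prod.lift_snd_assoc]⟩
    ⟨pullback.snd r s, by
      rw [← pullback.condition]
      apply Limits.prod.hom_ext <;> simp [prod.lift_fst, prod.lift_snd, prod.lift_fst_assoc, prod.lift_snd_assoc]⟩
  have hθ' : θ ≫ t = pullback.fst r s ≫ r := by
    rw [hθ]; apply Limits.prod.hom_ext <;> simp [prod.lift_fst, prod.lift_snd, prod.lift_fst_assoc, prod.lift_snd_assoc]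
  have hRS' : ∀ ⦃V : D⦄ (a b : V ⟶ F.obj X),
      RelFactors (tr F r) a b → RelFactors (tr F s) a b → RelFactors (tr F t) a b := by
    intro V a b ⟨u, hu⟩ ⟨v, hv⟩
    have huv : u ≫ F.map r = v ≫ F.map s := by
      apply (cancel_mono (cmp F X)).1
      rw [Category.assoc, Category.assoc, ← tr, ← tr, hu, hv]
    have hpb := (IsPullback.of_hasPullback r s).map F
    set w := hpb.lift u v huv with hwdef
    refine ⟨w ≫ F.map θ, ?_⟩
    rw [tr, Category.assoc, ← Category.assoc (F.map θ), ← F.map_comp, hθ', F.map_comp,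
      ← Category.assoc, ← Category.assoc, hpb.lift_fst, Category.assoc, ← tr, hu]
  have key : RelFactors (tr F t) (F.map y) (F.map z) :=
    hD (tr F r) (tr F s) (tr F t) (equiv_map F hr) (equiv_map F hs) (equiv_map F ht)
      hRS' (F.map x) (F.map y) (F.map z)
      (relFactors_map F hxy) (relFactors_map F hyz) (relFactors_map F hxz)
  have := ht.mono
  exact relFactors_reflect F t y z key
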